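/- Let S be a join-semilattice with zero and let δ : X × X → S be a V-distance of type 1 whose range join-generates S. Then S satisfies WURP=(e) with witness m = 1, for every e ∈ S. -/
import Mathlib


universe u

/-- An `S`-valued distance on `X`. -/
def IsSDistance {X : Type*} {S : Type*} [SemilatticeSup S] [OrderBot S]
    (δ : X → X → S) : Prop :=
  (∀ x, δ x x = ⊥) ∧ (∀ x y, δ x y = δ y x) ∧
    (∀ x y z, δ x z ≤ δ x y ⊔ δ y z)

/-- The V-condition of type 1. -/
def VConditionTypeOne {X : Type*} {S : Type*} [SemilatticeSup S] [OrderBot S]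
    (δ : X → X → S) : Prop :=
  ∀ x y : X, ∀ a b : S, δ x y ≤ a ⊔ b → ∃ z : X, δ x z ≤ a ∧ δ z y ≤ b

/-- `S` satisfies `WURP⁼(e)` with witness `m`. -/
def WURPeqWith {S : Type*} [SemilatticeSup S] [OrderBot S] (m : ℕ) (e : S) : Prop :=
  ∀ (I : Type u) (a b : I → S), (∀ i, e ≤ a i ⊔ b i) →
    ∃ (J : Fin m → Set I) (c : I → I → S),
      (∀ i : I, ∃ u : Fin m, i ∈ J u) ∧
      (∀ u : Fin m, ∀ i ∈ J u, ∀ j ∈ J u,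
        c i j ≤ a i ⊔ a j ∧ c i j ≤ b i ⊔ b j ∧ e ≤ a j ⊔ b i ⊔ c i j) ∧
      (∀ i j k : I, c i k ≤ c i j ⊔ c j k)

/-- If `δ : X × X → S` is a V-distance of type 1 whose range join-generates
`S`, then `S` satisfies `WURP⁼(e)` with witness `m = 1`, for every `e ∈ S`. -/
theorem wurp_one_of_type_one {X : Type*} {S : Type*} [SemilatticeSup S]
    [OrderBot S] (δ : X → X → S) (hδ : IsSDistance δ) (hV : VConditionTypeOne δ)
    (hgen : ∀ s : S, ∃ t : Finset (X × X), s = t.sup fun p => δ p.1 p.2) :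
    ∀ e : S, WURPeqWith.{u} 1 e := by
  obtain ⟨hrefl, hsymm, htri⟩ := hδ
  intro e I a b hab
  obtain ⟨T, hT⟩ := hgen e
  have key : ∀ (i : I) (p : X × X), ∃ z : X,
      p ∈ T → δ p.1 z ≤ a i ∧ δ z p.2 ≤ b i := by
    intro i p
    by_cases hp : p ∈ T
    · have h1 : δ p.1 p.2 ≤ e := hT ▸ Finset.le_sup (f := fun p => δ p.1 p.2) hp
      obtain ⟨z, hz⟩ := hV p.1 p.2 (a i) (b i) (h1.trans (hab i))
      exact ⟨z, fun _ => hz⟩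
    · exact ⟨p.1, fun h => absurd h hp⟩
  choose z hz using key
  refine ⟨fun _ => Set.univ, fun i j => T.sup fun p => δ (z i p) (z j p),
    fun i => ⟨0, trivial⟩, fun _ i _ j _ => ⟨?_, ?_, ?_⟩, fun i j k => ?_⟩
  · refine Finset.sup_le fun p hp => ?_
    calc δ (z i p) (z j p) ≤ δ (z i p) p.1 ⊔ δ p.1 (z j p) := htri _ _ _
      _ ≤ a i ⊔ a j := sup_le_sup ((hsymm _ _ ▸ (hz i p hp).1)) (hz j p hp).1
  · refine Finset.sup_le fun p hp => ?_
    calc δ (z i p) (z j p) ≤ δ (z i p) p.2 ⊔ δ p.2 (z j p) := htri _ _ _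
      _ ≤ b i ⊔ b j := sup_le_sup (hz i p hp).2 (hsymm _ _ ▸ (hz j p hp).2)
  · rw [hT]
    refine Finset.sup_le fun p hp => ?_
    have h1 : δ p.1 p.2 ≤ δ p.1 (z j p) ⊔ (δ (z j p) (z i p) ⊔ δ (z i p) p.2) :=
      (htri _ (z j p) _).trans (sup_le_sup_left (htri _ (z i p) _) _)
    refine h1.trans ?_
    have hc : δ (z j p) (z i p) ≤ T.sup fun q => δ (z i q) (z j q) :=
      (hsymm _ _).le.trans (Finset.le_sup (f := fun q => δ (z i q) (z j q)) hp)
    calc δ p.1 (z j p) ⊔ (δ (z j p) (z i p) ⊔ δ (z i p) p.2)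
        ≤ a j ⊔ ((T.sup fun q => δ (z i q) (z j q)) ⊔ b i) :=
          sup_le_sup (hz j p hp).1 (sup_le_sup hc (hz i p hp).2)
      _ = a j ⊔ b i ⊔ T.sup fun q => δ (z i q) (z j q) := by
          rw [sup_comm ((T.sup fun q => δ (z i q) (z j q))) (b i), ← sup_assoc]
  · refine Finset.sup_le fun p hp => ?_
    exact (htri _ (z j p) _).trans (sup_le_sup
      (Finset.le_sup (f := fun q => δ (z i q) (z j q)) hp)
      (Finset.le_sup (f := fun q => δ (z j q) (z k q)) hp))
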